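/- Upper bound on VC-dimension for arbitrary distances: consider a dataset V of size N and the hypothesis class {h_ρ : ρ a distance function on V}, where h_ρ(x,y,z) = sign(ρ(x,y) − ρ(x,z)). No set of triples of size greater than N² can be shattered by this class; hence the VC-dimension is at most N². -/

import Mathlib

namespace VCAux

variable {K : Type*}

def pairs (c : List K) : List (K × K) := c.zip c.tail

def edges (c : List K) : List (Sym2 K) := (pairs c).map fun p => s(p.1, p.2)

@[simp] lemma pairs_nil : pairs ([] : List K) = [] := rfl
@[simp] lemma pairs_single (x : K) : pairs [x] = [] := rfl
@[simp] lemma pairs_cons_cons (x y : K) (c : List K) :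
    pairs (x :: y :: c) = (x, y) :: pairs (y :: c) := rfl

@[simp] lemma edges_nil : edges ([] : List K) = [] := rfl
@[simp] lemma edges_single (x : K) : edges [x] = [] := rfl
@[simp] lemma edges_cons_cons (x y : K) (c : List K) :
    edges (x :: y :: c) = s(x, y) :: edges (y :: c) := rfl

lemma mem_of_mem_edges : ∀ (c : List K) {e : Sym2 K}, e ∈ edges c → ∀ z ∈ e, z ∈ c
  | [], e, he => by simp at he
  | [x], e, he => by simp at he
  | x :: y :: c, e, he => by
    intro z hz
    rw [edges_cons_cons, List.mem_cons] at he
    rcases he with rfl | he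
    · rcases Sym2.mem_iff.mp hz with rfl | rfl <;> simp
    · have := mem_of_mem_edges (y :: c) he z hz
      exact List.mem_cons_of_mem _ this

lemma nodup_edges : ∀ (c : List K), c.Nodup → (edges c).Nodup
  | [], _ => by simp
  | [x], _ => by simp
  | x :: y :: c, h => by
    rw [edges_cons_cons, List.nodup_cons]
    refine ⟨fun hmem => ?_, nodup_edges (y :: c) (List.nodup_cons.mp h).2⟩
    have hx : x ∈ y :: c := mem_of_mem_edges (y :: c) hmem x (Sym2.mem_mk_left x y)
    exact (List.nodup_cons.mp h).1 hx

lemma exists_cycle [DecidableEq K] :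
    ∀ (n : ℕ) (W : Finset K) (E : Finset (Sym2 K)),
      W.card ≤ n →
      (∀ e ∈ E, ¬ e.IsDiag) →
      (∀ e ∈ E, ∀ x ∈ e, x ∈ W) →
      W.card < E.card →
      ∃ (k : K) (l : List K), l ≠ [] ∧
        List.Chain (fun x y => s(x, y) ∈ E) k l ∧
        l.getLast? = some k ∧ (edges (k :: l)).Nodup := by
  intro n
  induction n with
  | zero =>
    intro W E hWn hdiag hend hcard
    exfalso
    obtain ⟨e, he⟩ := Finset.card_pos.mp (lt_of_le_of_lt (Nat.zero_le _) hcard)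
    induction e using Sym2.ind with
    | _ x y =>
      have hx : x ∈ W := hend _ he x (Sym2.mem_mk_left x y)
      have : W.card = 0 := Nat.le_zero.mp hWn
      simp [Finset.card_eq_zero.mp this] at hx
  | succ n ih =>
    intro W E hWn hdiag hend hcard
    by_cases hdeg : ∃ k ∈ W, (E.filter (fun e => k ∈ e)).card ≤ 1
    · -- trim a low-degree vertex
      obtain ⟨k, hkW, hdegk⟩ := hdeg
      have hsplit := Finset.card_filter_add_card_filter_not (s := E)
        (p := fun e => k ∈ e)
      have hW1 : 1 ≤ W.card := Finset.card_pos.mpr ⟨k, hkW⟩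
      have herase : (W.erase k).card = W.card - 1 := Finset.card_erase_of_mem hkW
      obtain ⟨k', l, hl, hchain, hlast, hnodup⟩ :=
        ih (W.erase k) (E.filter (fun e => k ∉ e))
          (by omega)
          (fun e heE => hdiag e (Finset.mem_filter.mp heE).1)
          (by
            intro e heE x hx
            rcases Finset.mem_filter.mp heE with ⟨heE', hk⟩
            refine Finset.mem_erase.mpr ⟨fun hxk => hk (hxk ▸ hx), hend e heE' x hx⟩)
          (by
            have : (E.filter (fun e => k ∉ e)).card + 1 ≥ E.card := by
              have := hsplit; omega
            omega)
      exact ⟨k', l, hl,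
        List.Chain.imp (fun a b hab => (Finset.mem_filter.mp hab).1) hchain, hlast, hnodup⟩
    · push_neg at hdeg
      have hdeg' : ∀ k ∈ W, 1 < (E.filter (fun e => k ∈ e)).card := hdeg
      have hEpos : 0 < E.card := lt_of_le_of_lt (Nat.zero_le _) hcard
      have key : ∀ m : ℕ,
          (∃ (k : K) (l : List K), l ≠ [] ∧
            List.Chain (fun x y => s(x, y) ∈ E) k l ∧
            l.getLast? = some k ∧ (edges (k :: l)).Nodup) ∨
          ∃ (k : K) (l : List K),
            List.Chain (fun x y => s(x, y) ∈ E) k l ∧ (k :: l).Nodup ∧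
            (∀ x ∈ k :: l, x ∈ W) ∧ m ≤ l.length := by
        intro m
        induction m with
        | zero =>
          right
          obtain ⟨e, he⟩ := Finset.card_pos.mp hEpos
          induction e using Sym2.ind with
          | _ x y =>
            refine ⟨x, [], List.Chain.nil, by simp, ?_, by simp⟩
            intro z hz
            rw [List.mem_singleton] at hz
            exact hz ▸ hend _ he x (Sym2.mem_mk_left x y)
        | succ m ihm =>
          rcases ihm with h | ⟨k, l, hch, hnd, hWm, hlen⟩
          · exact Or.inl h
          have hkW := hWm k List.mem_cons_self
          have hdegk := hdeg' k hkW
          cases l with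
          | nil =>
            obtain ⟨e, he⟩ := Finset.card_pos.mp (by omega :
              0 < (E.filter (fun e => k ∈ e)).card)
            have heE := (Finset.mem_filter.mp he).1
            have hke : k ∈ e := (Finset.mem_filter.mp he).2
            obtain ⟨k', rfl⟩ := Sym2.mem_iff_exists.mp hke
            have hkk' : k ≠ k' := fun h => hdiag _ heE (Sym2.mk_isDiag_iff.mpr h)
            right
            refine ⟨k', [k], ?_, by simp [Ne.symm hkk'], ?_, by simpa using hlen⟩
            · exact List.Chain.cons (by rw [Sym2.eq_swap]; exact heE) List.Chain.nil
            · intro z hz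
              rcases List.mem_cons.mp hz with rfl | hz
              · exact hend _ heE z (Sym2.mem_mk_right k z)
              · rw [List.mem_singleton] at hz; exact hz ▸ hkW
          | cons k₁ l' =>
            obtain ⟨e, he, hne⟩ := Finset.exists_mem_ne hdegk s(k, k₁)
            have heE := (Finset.mem_filter.mp he).1
            have hke : k ∈ e := (Finset.mem_filter.mp he).2
            obtain ⟨k', rfl⟩ := Sym2.mem_iff_exists.mp hke
            have hkk' : k ≠ k' := fun h => hdiag _ heE (Sym2.mk_isDiag_iff.mpr h)
            by_cases hmem : k' ∈ k :: k₁ :: l'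
            · -- found a cycle
              left
              have hk'l : k' ∈ k₁ :: l' := by
                rcases List.mem_cons.mp hmem with h | h
                · exact absurd h.symm hkk'
                · exact h
              obtain ⟨l₁, l₂, hl⟩ := List.append_of_mem hk'l
              cases l₁ with
              | nil =>
                exfalso
                simp only [List.nil_append, List.cons.injEq] at hl
                exact hne (by rw [hl.1])
              | cons c l₁' =>
                rw [List.cons_append, List.cons.injEq] at hl
                obtain ⟨rfl, hl'⟩ := hl
                subst hl'
                refine ⟨k', k :: k₁ :: l₁' ++ [k'], by simp, ?_, ?_, ?_⟩
                · refine List.Chain.cons (by rw [Sym2.eq_swap]; exact heE) ?_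
                  have := (List.isChain_cons_split (l₁ := k₁ :: l₁') (l₂ := l₂)).mp hch
                  exact this.1
                · have : k :: k₁ :: l₁' ++ [k'] = (k :: k₁ :: l₁') ++ [k'] := by simp
                  rw [this, List.getLast?_concat]
                · have hnd2 : (k :: k₁ :: l₁' ++ [k']).Nodup := by
                    refine List.Nodup.sublist ?_ hnd
                    have h0 : List.Sublist [k'] (k' :: l₂) := (List.nil_sublist l₂).cons₂ k'
                    simpa using h0.append_left (k :: k₁ :: l₁')
                  have hedges : edges (k' :: (k :: k₁ :: l₁' ++ [k'])) =
                      s(k', k) :: edges (k :: k₁ :: l₁' ++ [k']) := rfl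
                  rw [hedges, List.nodup_cons]
                  refine ⟨fun hmem2 => ?_, nodup_edges _ hnd2⟩
                  have hedges2 : edges (k :: k₁ :: l₁' ++ [k']) =
                      s(k, k₁) :: edges (k₁ :: l₁' ++ [k']) := rfl
                  rw [hedges2, List.mem_cons] at hmem2
                  rcases hmem2 with heq | hmem2
                  · rcases Sym2.eq_iff.mp heq with ⟨h1, h2⟩ | ⟨h1, h2⟩
                    · exact hkk' h1.symm
                    · -- k' = k₁, but k₁ occurs before k' in the nodup list
                      have hnmem : k₁ ∉ l₁' ++ k' :: l₂ := by
                        have := hnd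
                        simp only [List.nodup_cons] at this
                        exact this.2.1
                      exact hnmem (by rw [← h1]; simp)
                  · have hkmem := mem_of_mem_edges _ hmem2 k (Sym2.mem_mk_right k' k)
                    have hknm : k ∉ k₁ :: l₁' ++ [k'] := by
                      have hk0 : k ∉ k₁ :: (l₁' ++ k' :: l₂) := (List.nodup_cons.mp hnd).1
                      intro hk1
                      apply hk0
                      rcases List.mem_cons.mp hk1 with h | h
                      · exact h ▸ List.mem_cons_self
                      · rcases List.mem_append.mp h with h | h
                        · exact List.mem_cons_of_mem _ (List.mem_append.mpr (Or.inl h))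
                        · rw [List.mem_singleton] at h
                          subst h
                          simp
                    exact hknm hkmem
            · -- extend the path
              right
              refine ⟨k', k :: k₁ :: l',
                List.Chain.cons (by rw [Sym2.eq_swap]; exact heE) hch,
                List.nodup_cons.mpr ⟨hmem, hnd⟩, ?_, by simpa using Nat.succ_le_succ hlen⟩
              intro z hz
              rcases List.mem_cons.mp hz with rfl | hz
              · exact hend _ heE z (Sym2.mem_mk_right k z)
              · exact hWm z hz
      rcases key W.card with hgoal | ⟨k, l, _, hnd, hWmem, hlen⟩
      · exact hgoal
      · exfalso
        have h1 : (k :: l).toFinset ⊆ W := fun x hx => hWmem x (List.mem_toFinset.mp hx)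
        have h2 := Finset.card_le_card h1
        rw [List.toFinset_card_of_nodup hnd] at h2
        simp only [List.length_cons] at h2
        omega


lemma chain_pairs : ∀ (l : List K) (k : K),
    List.Chain (fun x y => (x, y) ∈ pairs (k :: l)) k l
  | [], _ => List.Chain.nil
  | y :: l, k => by
    refine List.Chain.cons (by simp) ?_
    exact List.Chain.imp (fun a b hab => by
      rw [pairs_cons_cons]; exact List.mem_cons_of_mem _ hab) (chain_pairs l y)

lemma rel_of_chain_mem_pairs {R : K → K → Prop} :
    ∀ {l : List K} {k : K}, List.Chain R k l → ∀ p ∈ pairs (k :: l), R p.1 p.2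
  | [], k, _, p, hp => by simp [pairs] at hp
  | y :: l, k, h, p, hp => by
    rcases List.chain_cons.mp h with ⟨h1, h2⟩
    rw [pairs_cons_cons, List.mem_cons] at hp
    rcases hp with rfl | hp
    · exact h1
    · exact rel_of_chain_mem_pairs h2 p hp

lemma chain_le_getLast (u : K → ℝ) :
    ∀ (l : List K) (k m : K), List.Chain (fun x y => u x ≤ u y) k l →
      l.getLast? = some m → u k ≤ u m
  | [], k, m, _, hl => by simp at hl
  | [y], k, m, h, hl => by
    simp only [List.getLast?_singleton, Option.some.injEq] at hl
    subst hl
    exact (List.chain_cons.mp h).1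
  | y :: z :: l, k, m, h, hl => by
    rcases List.chain_cons.mp h with ⟨h1, h2⟩
    rw [List.getLast?_cons_cons] at hl
    exact h1.trans (chain_le_getLast u (z :: l) y m h2 hl)

lemma cycle_chain_false (u : K → ℝ) (k k₁ : K) (l' : List K)
    (hlast : (k₁ :: l').getLast? = some k)
    (hne : k ≠ k₁)
    (hch : List.Chain (fun x y => u x ≤ u y) k (k₁ :: l'))
    (hstrict : u k < u k₁) : False := by
  cases l' with
  | nil =>
    simp only [List.getLast?_singleton, Option.some.injEq] at hlast
    exact hne hlast.symm
  | cons k₂ l'' =>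
    rw [List.getLast?_cons_cons] at hlast
    have h2 := (List.chain_cons.mp hch).2
    have := chain_le_getLast u (k₂ :: l'') k₁ k h2 hlast
    linarith

lemma grand {Q : Type*} [DecidableEq K] [Fintype K] (a b : Q → K) (S : Finset Q)
    (hcard : Fintype.card K < S.card)
    (h : ∀ σ : Q → Bool, ∃ v : K → ℝ, ∀ q ∈ S, (v (a q) < v (b q) ↔ σ q = true)) :
    False := by
  classical
  have step1 : ∀ q ∈ S, a q ≠ b q := by
    intro q hq hab
    obtain ⟨v, hv⟩ := h (fun _ => true)
    have := (hv q hq).mpr rfl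
    rw [hab] at this
    exact lt_irrefl _ this
  have step2 : Set.InjOn (fun q => s(a q, b q)) S := by
    intro q hq q' hq' hkey
    by_contra hne
    simp only at hkey
    rcases Sym2.eq_iff.mp hkey with ⟨h1, h2⟩ | ⟨h1, h2⟩
    · obtain ⟨v, hv⟩ := h (fun r => if r = q then true else false)
      have hvq : v (a q) < v (b q) := (hv q hq).mpr (by simp)
      have hvq' : ¬ (v (a q') < v (b q')) := by
        intro hlt
        have := (hv q' hq').mp hlt
        rw [if_neg (fun hh => hne hh.symm)] at this
        simp at this
      exact hvq' (by rw [← h1, ← h2]; exact hvq)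
    · obtain ⟨v, hv⟩ := h (fun _ => true)
      have hvq := (hv q hq).mpr rfl
      have hvq' := (hv q' hq').mpr rfl
      rw [h1, h2] at hvq
      exact absurd hvq' (lt_asymm hvq)
  set E := S.image (fun q => s(a q, b q)) with hE
  have hmemE : ∀ e ∈ E, ∃ q ∈ S, s(a q, b q) = e := by
    intro e he
    obtain ⟨q, hq, hqe⟩ := Finset.mem_image.mp he
    exact ⟨q, hq, hqe⟩
  have hdiag : ∀ e ∈ E, ¬ e.IsDiag := by
    intro e he hd
    obtain ⟨q, hq, rfl⟩ := Finset.mem_image.mp he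
    exact step1 q hq (Sym2.mk_isDiag_iff.mp hd)
  have hcardE : (Finset.univ : Finset K).card < E.card := by
    rw [hE, Finset.card_image_of_injOn step2, Finset.card_univ]
    exact hcard
  obtain ⟨k, l, hlne, hchain, hlast, hnodup⟩ :=
    exists_cycle ((Finset.univ : Finset K).card) Finset.univ E (le_refl _) hdiag
      (fun _ _ x _ => Finset.mem_univ x) hcardE
  cases l with
  | nil => exact hlne rfl
  | cons k₁ l' =>
    have hplE : ∀ p ∈ pairs (k :: k₁ :: l'), s(p.1, p.2) ∈ E :=
      rel_of_chain_mem_pairs hchain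
    have hfirst : (k, k₁) ∈ pairs (k :: k₁ :: l') := by simp
    have he0 : s(k, k₁) ∈ E := hplE _ hfirst
    obtain ⟨q₀, hq₀, hkey₀⟩ := hmemE _ he0
    have huniq : ∀ p ∈ pairs (k :: k₁ :: l'), ∀ p' ∈ pairs (k :: k₁ :: l'),
        s(p.1, p.2) = s(p'.1, p'.2) → p = p' := by
      intro p hp p' hp' hpe
      exact List.inj_on_of_nodup_map hnodup hp hp' hpe
    have hdiagp : ∀ p ∈ pairs (k :: k₁ :: l'), p.1 ≠ p.2 := by
      intro p hp hpd
      exact hdiag _ (hplE p hp) (Sym2.mk_isDiag_iff.mpr hpd)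
    have hnefirst : k ≠ k₁ := hdiagp (k, k₁) hfirst
    rcases Sym2.eq_iff.mp hkey₀ with ⟨ha₀, hb₀⟩ | ⟨ha₀, hb₀⟩
    · -- forward orientation
      obtain ⟨v, hv⟩ := h (fun q =>
        if ∃ p ∈ pairs (k :: k₁ :: l'), a q = p.1 ∧ b q = p.2 then true else false)
      have hle : ∀ p ∈ pairs (k :: k₁ :: l'), v p.1 ≤ v p.2 := by
        intro p hp
        obtain ⟨q, hq, hkeyq⟩ := hmemE _ (hplE p hp)
        rcases Sym2.eq_iff.mp hkeyq with ⟨h1, h2⟩ | ⟨h1, h2⟩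
        · have : v (a q) < v (b q) := (hv q hq).mpr (by rw [if_pos ⟨p, hp, h1, h2⟩])
          rw [h1, h2] at this
          exact this.le
        · have hfalse : ¬ ∃ p' ∈ pairs (k :: k₁ :: l'), a q = p'.1 ∧ b q = p'.2 := by
            rintro ⟨p', hp', g1, g2⟩
            have hpe : s(p'.1, p'.2) = s(p.1, p.2) := by
              rw [← g1, ← g2]; exact hkeyq
            have hpp := huniq p' hp' p hp hpe
            subst hpp
            exact hdiagp p' hp' (by rw [← g1, h1])
          have hnlt : ¬ (v (a q) < v (b q)) := by
            intro hlt
            have := (hv q hq).mp hlt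
            rw [if_neg hfalse] at this
            simp at this
          rw [h1, h2] at hnlt
          exact le_of_not_gt hnlt
      have hstrict : v k < v k₁ := by
        have : v (a q₀) < v (b q₀) :=
          (hv q₀ hq₀).mpr (by rw [if_pos ⟨(k, k₁), hfirst, ha₀, hb₀⟩])
        rwa [ha₀, hb₀] at this
      have hchle : List.Chain (fun x y => v x ≤ v y) k (k₁ :: l') :=
        List.Chain.imp (fun x y hxy => hle (x, y) hxy) (chain_pairs _ k)
      exact cycle_chain_false v k k₁ l' hlast hnefirst hchle hstrict
    · -- backward orientation
      obtain ⟨v, hv⟩ := h (fun q =>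
        if ∃ p ∈ pairs (k :: k₁ :: l'), a q = p.2 ∧ b q = p.1 then true else false)
      have hle : ∀ p ∈ pairs (k :: k₁ :: l'), v p.2 ≤ v p.1 := by
        intro p hp
        obtain ⟨q, hq, hkeyq⟩ := hmemE _ (hplE p hp)
        rcases Sym2.eq_iff.mp hkeyq with ⟨h1, h2⟩ | ⟨h1, h2⟩
        · have hfalse : ¬ ∃ p' ∈ pairs (k :: k₁ :: l'), a q = p'.2 ∧ b q = p'.1 := by
            rintro ⟨p', hp', g1, g2⟩
            have hpe : s(p'.1, p'.2) = s(p.1, p.2) := by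
              rw [← g1, ← g2, Sym2.eq_swap]; exact hkeyq
            have hpp := huniq p' hp' p hp hpe
            subst hpp
            exact hdiagp p' hp' (by rw [← g2, h2])
          have hnlt : ¬ (v (a q) < v (b q)) := by
            intro hlt
            have := (hv q hq).mp hlt
            rw [if_neg hfalse] at this
            simp at this
          rw [h1, h2] at hnlt
          exact le_of_not_gt hnlt
        · have : v (a q) < v (b q) := (hv q hq).mpr (by rw [if_pos ⟨p, hp, h1, h2⟩])
          rw [h1, h2] at this
          exact this.le
      have hstrict : v k₁ < v k := by
        have : v (a q₀) < v (b q₀) :=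
          (hv q₀ hq₀).mpr (by rw [if_pos ⟨(k, k₁), hfirst, ha₀, hb₀⟩])
        rwa [ha₀, hb₀] at this
      have hchle : List.Chain (fun x y => (fun z => -(v z)) x ≤ (fun z => -(v z)) y)
          k (k₁ :: l') :=
        List.Chain.imp (fun x y hxy => by
          simpa using hle (x, y) hxy) (chain_pairs _ k)
      exact cycle_chain_false (fun z => -(v z)) k k₁ l' hlast hnefirst hchle
        (by simpa using hstrict)


end VCAux

/-- Upper bound for arbitrary distances: no set of more than `N²` triples over a
dataset of size `N` can be shattered by the hypotheses
`h_ρ(x,y,z) = sign (ρ x y - ρ x z)` ranging over symmetric distance functions `ρ`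
(label `true` for a triple `(x,y,z)` meaning `ρ x y < ρ x z`).  Hence the
VC-dimension of this class is at most `N²`. -/
theorem stmt_13 (N : ℕ) (S : Finset (Fin N × Fin N × Fin N)) (hS : N ^ 2 < S.card) :
    ¬ ∀ σ : (Fin N × Fin N × Fin N) → Bool,
        ∃ ρ : Fin N → Fin N → ℝ,
          (∀ a b, ρ a b = ρ b a) ∧
          ∀ q ∈ S, (ρ q.1 q.2.1 < ρ q.1 q.2.2 ↔ σ q = true) := by
  intro h
  have hK : Fintype.card (Sym2 (Fin N)) < S.card := by
    have h1 : Fintype.card (Sym2 (Fin N)) ≤ N ^ 2 := by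
      have := Fintype.card_le_of_surjective (Function.uncurry (Sym2.mk (α := Fin N)))
        Sym2.mk_surjective
      simpa [sq] using this
    omega
  exact VCAux.grand (fun q => s(q.1, q.2.1)) (fun q => s(q.1, q.2.2)) S hK (fun σ => by
    obtain ⟨ρ, hsym, hρ⟩ := h σ
    exact ⟨Sym2.lift ⟨ρ, hsym⟩, fun q hq => by
      simpa [Sym2.lift_mk] using hρ q hq⟩)
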